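/- Time-shift insensitivity of the stationary tail: under (HP1)–(HP3), sup over t > T_n of | ℙ_{π_n}(τ_{x_n} > t − T_n) / ℙ_{π_n}(τ_{x_n} > t) − 1 | → 0 as n → ∞. -/
import Mathlib


open Finset Filter

/-- The kernel of the chain killed at `x`: all entries from or to `x` are set to zero.
For `y, z ≠ x` the powers of `killed P x` agree with the powers of the principal
submatrix `[P]_x` of `P` obtained by deleting the row and the column indexed by `x`. -/
def killed {n : ℕ} (P : Matrix (Fin n) (Fin n) ℝ) (x : Fin n) :
    Matrix (Fin n) (Fin n) ℝ :=
  Matrix.of fun y z => if y = x ∨ z = x then 0 else P y z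

/-- The no-hit probability `ℙ_α(τ_x > t) = Σ_{y ≠ x} Σ_{z ≠ x} α(y)·([P]_x)^t(y,z)`. -/
def noHit {n : ℕ} (P : Matrix (Fin n) (Fin n) ℝ) (x : Fin n)
    (a : Fin n → ℝ) (t : ℕ) : ℝ :=
  ∑ y ∈ Finset.univ.erase x, ∑ z ∈ Finset.univ.erase x, a y * ((killed P x) ^ t) y z

/-- The expected number of returns to `x` within time `T`:
`R_T(x) = Σ_{t=0}^{T} P^t(x,x)`. -/
def returns {n : ℕ} (P : Matrix (Fin n) (Fin n) ℝ) (x : Fin n) (T : ℕ) : ℝ :=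
  ∑ t ∈ Finset.range (T + 1), (P ^ t) x x

namespace TS

variable {n : ℕ} (P : Matrix (Fin n) (Fin n) ℝ) (x : Fin n) (pi : Fin n → ℝ)

lemma killed_apply (y z : Fin n) :
    killed P x y z = if y = x ∨ z = x then 0 else P y z := rfl

lemma killed_nonneg (hP : ∀ y z, 0 ≤ P y z) (y z : Fin n) : 0 ≤ killed P x y z := by
  rw [killed_apply]; split
  · exact le_rfl
  · exact hP y z

lemma killed_le (hP : ∀ y z, 0 ≤ P y z) (y z : Fin n) : killed P x y z ≤ P y z := by
  rw [killed_apply]; split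
  · exact hP y z
  · exact le_rfl

lemma pow_entry_nonneg {A : Matrix (Fin n) (Fin n) ℝ} (hA : ∀ y z, 0 ≤ A y z) :
    ∀ (t : ℕ) (y z : Fin n), 0 ≤ (A ^ t) y z := by
  intro t
  induction t with
  | zero => intro y z; rw [pow_zero, Matrix.one_apply]; split <;> norm_num
  | succ t ih =>
    intro y z
    rw [pow_succ, Matrix.mul_apply]
    exact Finset.sum_nonneg fun w _ => mul_nonneg (ih y w) (hA w z)

lemma pow_entry_le {A B : Matrix (Fin n) (Fin n) ℝ} (hA : ∀ y z, 0 ≤ A y z)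
    (hAB : ∀ y z, A y z ≤ B y z) :
    ∀ (t : ℕ) (y z : Fin n), (A ^ t) y z ≤ (B ^ t) y z := by
  have hB : ∀ y z, 0 ≤ B y z := fun y z => le_trans (hA y z) (hAB y z)
  intro t
  induction t with
  | zero => intro y z; exact le_rfl
  | succ t ih =>
    intro y z
    rw [pow_succ, pow_succ, Matrix.mul_apply, Matrix.mul_apply]
    refine Finset.sum_le_sum fun w _ => ?_
    exact mul_le_mul (ih y w) (hAB w z) (hA w z) (pow_entry_nonneg hB t y w)

lemma kpow_col : ∀ (t : ℕ) (y : Fin n), y ≠ x → ((killed P x) ^ t) y x = 0 := by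
  intro t
  induction t with
  | zero => intro y hy; rw [pow_zero]; exact Matrix.one_apply_ne hy
  | succ t ih =>
    intro y hy
    rw [pow_succ, Matrix.mul_apply]
    refine Finset.sum_eq_zero fun w _ => ?_
    have : killed P x w x = 0 := by rw [killed_apply, if_pos (Or.inr rfl)]
    rw [this, mul_zero]

/-- row sums of surviving part -/
noncomputable def Srow (t : ℕ) (y : Fin n) : ℝ :=
  ∑ z ∈ Finset.univ.erase x, ((killed P x) ^ t) y z

/-- the killing mass at step t+1 -/
noncomputable def Dd (t : ℕ) : ℝ :=
  ∑ y ∈ Finset.univ.erase x, pi y *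
    ∑ w ∈ Finset.univ.erase x, ((killed P x) ^ t) y w * P w x

lemma noHit_eq (t : ℕ) :
    noHit P x pi t = ∑ y ∈ Finset.univ.erase x, pi y * Srow P x t y := by
  unfold noHit Srow
  exact Finset.sum_congr rfl fun y _ => (Finset.mul_sum _ _ _).symm

lemma sum_erase_killed (hrow : ∀ y, ∑ z, P y z = 1) (w : Fin n) (hw : w ≠ x) :
    ∑ z ∈ Finset.univ.erase x, killed P x w z = 1 - P w x := by
  have h1 : ∀ z ∈ Finset.univ.erase x, killed P x w z = P w z := by
    intro z hz
    rw [killed_apply, if_neg]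
    push_neg
    exact ⟨hw, (Finset.mem_erase.mp hz).1⟩
  rw [Finset.sum_congr rfl h1]
  have h2 := Finset.sum_erase_add Finset.univ (fun z => P w z) (Finset.mem_univ x)
  have h3 := hrow w
  linarith

lemma Srow_succ (hrow : ∀ y, ∑ z, P y z = 1) (t : ℕ) (y : Fin n) (hy : y ≠ x) :
    Srow P x (t + 1) y
      = Srow P x t y - ∑ w ∈ Finset.univ.erase x, ((killed P x) ^ t) y w * P w x := by
  have step1 : Srow P x (t + 1) y
      = ∑ w, ((killed P x) ^ t) y w * ∑ z ∈ Finset.univ.erase x, killed P x w z := by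
    unfold Srow
    have e1 : ∀ z ∈ Finset.univ.erase x, ((killed P x) ^ (t+1)) y z
        = ∑ w, ((killed P x) ^ t) y w * killed P x w z := by
      intro z _
      rw [pow_succ, Matrix.mul_apply]
    rw [Finset.sum_congr rfl e1, Finset.sum_comm]
    exact Finset.sum_congr rfl fun w _ => (Finset.mul_sum _ _ _).symm
  rw [step1]
  rw [← Finset.sum_erase_add _ _ (Finset.mem_univ x), kpow_col P x t y hy, zero_mul,
    add_zero]
  have e2 : ∀ w ∈ Finset.univ.erase x,
      ((killed P x) ^ t) y w * ∑ z ∈ Finset.univ.erase x, killed P x w z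
        = ((killed P x) ^ t) y w - ((killed P x) ^ t) y w * P w x := by
    intro w hw
    rw [sum_erase_killed P x hrow w (Finset.mem_erase.mp hw).1]
    ring
  rw [Finset.sum_congr rfl e2, Finset.sum_sub_distrib]
  rfl

lemma noHit_succ (hrow : ∀ y, ∑ z, P y z = 1) (t : ℕ) :
    noHit P x pi (t + 1) = noHit P x pi t - Dd P x pi t := by
  rw [noHit_eq, noHit_eq]
  unfold Dd
  rw [← Finset.sum_sub_distrib]
  refine Finset.sum_congr rfl fun y hy => ?_
  rw [Srow_succ P x hrow t y (Finset.mem_erase.mp hy).1]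
  ring

lemma noHit_telescope (hrow : ∀ y, ∑ z, P y z = 1) (a m : ℕ) :
    noHit P x pi a - noHit P x pi (a + m) = ∑ j ∈ Finset.range m, Dd P x pi (a + j) := by
  induction m with
  | zero => simp
  | succ m ih =>
    rw [Finset.sum_range_succ, ← ih, ← Nat.add_assoc, noHit_succ P x pi hrow (a + m)]
    ring

lemma Dd_nonneg (hP : ∀ y z, 0 ≤ P y z) (hpn : ∀ y, 0 ≤ pi y) (t : ℕ) :
    0 ≤ Dd P x pi t := by
  refine Finset.sum_nonneg fun y _ => mul_nonneg (hpn y) (Finset.sum_nonneg fun w _ => ?_)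
  exact mul_nonneg (pow_entry_nonneg (killed_nonneg P x hP) t y w) (hP w x)

lemma noHit_nonneg (hP : ∀ y z, 0 ≤ P y z) (hpn : ∀ y, 0 ≤ pi y) (t : ℕ) :
    0 ≤ noHit P x pi t := by
  refine Finset.sum_nonneg fun y _ => Finset.sum_nonneg fun z _ => ?_
  exact mul_nonneg (hpn y) (pow_entry_nonneg (killed_nonneg P x hP) t y z)

lemma noHit_anti (hP : ∀ y z, 0 ≤ P y z) (hrow : ∀ y, ∑ z, P y z = 1)
    (hpn : ∀ y, 0 ≤ pi y) {a b : ℕ} (hab : a ≤ b) :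
    noHit P x pi b ≤ noHit P x pi a := by
  have h := noHit_telescope P x pi hrow a (b - a)
  rw [Nat.add_sub_cancel' hab] at h
  have h2 : 0 ≤ ∑ j ∈ Finset.range (b - a), Dd P x pi (a + j) :=
    Finset.sum_nonneg fun j _ => Dd_nonneg P x pi hP hpn (a + j)
  linarith

lemma vecMul_pow (hstat : Matrix.vecMul pi P = pi) :
    ∀ u : ℕ, Matrix.vecMul pi (P ^ u) = pi := by
  intro u
  induction u with
  | zero => rw [pow_zero, Matrix.vecMul_one]
  | succ u ih => rw [pow_succ, ← Matrix.vecMul_vecMul, ih, hstat]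

lemma Dd_le_pix (hP : ∀ y z, 0 ≤ P y z) (hpn : ∀ y, 0 ≤ pi y)
    (hstat : Matrix.vecMul pi P = pi) (t : ℕ) : Dd P x pi t ≤ pi x := by
  have key : Dd P x pi t ≤ ∑ y, pi y * ∑ w, (P ^ t) y w * P w x := by
    refine le_trans (Finset.sum_le_sum ?_) (Finset.sum_le_sum_of_subset_of_nonneg
      (Finset.erase_subset _ _) ?_)
    · intro y _
      refine mul_le_mul_of_nonneg_left ?_ (hpn y)
      refine le_trans (Finset.sum_le_sum ?_) (Finset.sum_le_sum_of_subset_of_nonneg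
        (Finset.erase_subset _ _) ?_)
      · intro w _
        exact mul_le_mul_of_nonneg_right
          (pow_entry_le (killed_nonneg P x hP) (killed_le P x hP) t y w) (hP w x)
      · intro w _ _
        exact mul_nonneg (pow_entry_nonneg hP t y w) (hP w x)
    · intro y _ _
      refine mul_nonneg (hpn y) (Finset.sum_nonneg fun w _ => ?_)
      exact mul_nonneg (pow_entry_nonneg hP t y w) (hP w x)
  have e1 : ∑ y, pi y * ∑ w, (P ^ t) y w * P w x = ∑ y, pi y * (P ^ (t+1)) y x := by
    refine Finset.sum_congr rfl fun y _ => ?_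
    rw [pow_succ, Matrix.mul_apply]
  have e2 : ∑ y, pi y * (P ^ (t+1)) y x = Matrix.vecMul pi (P ^ (t+1)) x := by
    rw [Matrix.vecMul, dotProduct]
  rw [e1, e2, vecMul_pow P pi hstat] at key
  exact key

lemma noHit_zero (hps : ∑ y, pi y = 1) : noHit P x pi 0 = 1 - pi x := by
  unfold noHit
  have e1 : ∀ y ∈ Finset.univ.erase x,
      ∑ z ∈ Finset.univ.erase x, pi y * ((killed P x) ^ 0) y z = pi y := by
    intro y hy
    rw [pow_zero]
    have : ∀ z ∈ Finset.univ.erase x, pi y * (1 : Matrix (Fin n) (Fin n) ℝ) y z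
        = if y = z then pi y else 0 := by
      intro z _
      rw [Matrix.one_apply]
      split <;> simp
    rw [Finset.sum_congr rfl this, Finset.sum_ite_eq, if_pos hy]
  rw [Finset.sum_congr rfl e1]
  have h2 := Finset.sum_erase_add Finset.univ pi (Finset.mem_univ x)
  rw [hps] at h2
  linarith

lemma noHit_ge (hP : ∀ y z, 0 ≤ P y z) (hrow : ∀ y, ∑ z, P y z = 1)
    (hpn : ∀ y, 0 ≤ pi y) (hps : ∑ y, pi y = 1)
    (hstat : Matrix.vecMul pi P = pi) (t : ℕ) :
    1 - (t + 1 : ℝ) * pi x ≤ noHit P x pi t := by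
  have h := noHit_telescope P x pi hrow 0 t
  rw [Nat.zero_add] at h
  have h2 : ∑ j ∈ Finset.range t, Dd P x pi (0 + j) ≤ (t : ℝ) * pi x := by
    calc ∑ j ∈ Finset.range t, Dd P x pi (0 + j)
        ≤ ∑ _j ∈ Finset.range t, pi x :=
          Finset.sum_le_sum fun j _ => Dd_le_pix P x pi hP hpn hstat (0 + j)
      _ = (t : ℝ) * pi x := by rw [Finset.sum_const, Finset.card_range]; ring
  rw [noHit_zero P x pi hps] at h
  linarith

lemma noHit_le_one (hP : ∀ y z, 0 ≤ P y z) (hrow : ∀ y, ∑ z, P y z = 1)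
    (hpn : ∀ y, 0 ≤ pi y) (hps : ∑ y, pi y = 1) (t : ℕ) :
    noHit P x pi t ≤ 1 := by
  have h := noHit_anti P x pi hP hrow hpn (Nat.zero_le t)
  rw [noHit_zero P x pi hps] at h
  have := hpn x
  linarith

lemma Dd_gap (hP : ∀ y z, 0 ≤ P y z) (hpn : ∀ y, 0 ≤ pi y)
    (T : ℕ) (hT1 : 1 ≤ T) (pstar : ℝ)
    (hPT : ∀ v, (P ^ T) v x ≤ pstar)
    (t : ℕ) (ht : T ≤ t + 1) :
    Dd P x pi t ≤ pstar * noHit P x pi (t + 1 - T) := by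
  have hknn := killed_nonneg P x hP
  set a := t + 1 - T with ha
  set b := T - 1 with hb
  have hsplit : (killed P x) ^ t = (killed P x) ^ a * (killed P x) ^ b := by
    rw [← pow_add]
    congr 1
    omega
  set g : Fin n → ℝ :=
    fun v => ∑ w ∈ Finset.univ.erase x, ((killed P x) ^ b) v w * P w x with hgdef
  have hg_nonneg : ∀ v, 0 ≤ g v := by
    intro v
    exact Finset.sum_nonneg fun w _ =>
      mul_nonneg (pow_entry_nonneg hknn b v w) (hP w x)
  have hg_le : ∀ v, g v ≤ pstar := by
    intro v
    have h1 : g v ≤ ∑ w, (P ^ b) v w * P w x := by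
      refine le_trans (Finset.sum_le_sum ?_)
        (Finset.sum_le_sum_of_subset_of_nonneg (Finset.erase_subset _ _) ?_)
      · intro w _
        exact mul_le_mul_of_nonneg_right
          (pow_entry_le hknn (killed_le P x hP) b v w) (hP w x)
      · intro w _ _
        exact mul_nonneg (pow_entry_nonneg hP b v w) (hP w x)
    have h2 : ∑ w, (P ^ b) v w * P w x = (P ^ T) v x := by
      rw [← Matrix.mul_apply, ← pow_succ]
      have : b + 1 = T := by omega
      rw [this]
    rw [h2] at h1
    exact le_trans h1 (hPT v)
  have inner_eq : ∀ y : Fin n,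
      ∑ w ∈ Finset.univ.erase x, ((killed P x) ^ t) y w * P w x
        = ∑ v, ((killed P x) ^ a) y v * g v := by
    intro y
    have e1 : ∀ w ∈ Finset.univ.erase x, ((killed P x) ^ t) y w * P w x
        = ∑ v, ((killed P x) ^ a) y v * (((killed P x) ^ b) v w * P w x) := by
      intro w _
      rw [hsplit, Matrix.mul_apply, Finset.sum_mul]
      exact Finset.sum_congr rfl fun v _ => by ring
    rw [Finset.sum_congr rfl e1, Finset.sum_comm]
    exact Finset.sum_congr rfl fun v _ => (Finset.mul_sum _ _ _).symm
  have inner_le : ∀ y : Fin n, y ≠ x →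
      ∑ w ∈ Finset.univ.erase x, ((killed P x) ^ t) y w * P w x
        ≤ pstar * Srow P x a y := by
    intro y hy
    rw [inner_eq y]
    rw [← Finset.sum_erase_add _ _ (Finset.mem_univ x), kpow_col P x a y hy, zero_mul,
      add_zero]
    calc ∑ v ∈ Finset.univ.erase x, ((killed P x) ^ a) y v * g v
        ≤ ∑ v ∈ Finset.univ.erase x, ((killed P x) ^ a) y v * pstar :=
          Finset.sum_le_sum fun v _ =>
            mul_le_mul_of_nonneg_left (hg_le v) (pow_entry_nonneg hknn a y v)
      _ = pstar * Srow P x a y := by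
          unfold Srow
          rw [Finset.mul_sum]
          exact Finset.sum_congr rfl fun v _ => by ring
  calc Dd P x pi t
      ≤ ∑ y ∈ Finset.univ.erase x, pi y * (pstar * Srow P x a y) := by
        refine Finset.sum_le_sum fun y hy => ?_
        exact mul_le_mul_of_nonneg_left (inner_le y (Finset.mem_erase.mp hy).1) (hpn y)
    _ = pstar * noHit P x pi a := by
        rw [noHit_eq, Finset.mul_sum]
        exact Finset.sum_congr rfl fun y _ => by ring

lemma main_ind (hP : ∀ y z, 0 ≤ P y z) (hrow : ∀ y, ∑ z, P y z = 1)
    (hpn : ∀ y, 0 ≤ pi y) (hps : ∑ y, pi y = 1)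
    (hstat : Matrix.vecMul pi P = pi)
    (T : ℕ) (hT1 : 1 ≤ T) (pstar η : ℝ)
    (hη0 : 0 < η) (hη : η ≤ 1/2)
    (hpx : pi x ≤ pstar)
    (hTp : (T : ℝ) * pstar ≤ η / 2)
    (hPT : ∀ v, (P ^ T) v x ≤ pstar) :
    ∀ s : ℕ, 0 < noHit P x pi s ∧
      (1 - η) * noHit P x pi (s - T) ≤ noHit P x pi s := by
  have hT1' : (1 : ℝ) ≤ (T : ℝ) := by exact_mod_cast hT1
  have hps0 : 0 ≤ pstar := le_trans (hpn x) hpx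
  have hTpx : (T : ℝ) * pi x ≤ η / 2 :=
    le_trans (mul_le_mul_of_nonneg_left hpx (by positivity)) hTp
  have hpix : pi x ≤ η / 2 :=
    le_trans (le_mul_of_one_le_left (hpn x) hT1') hTpx
  intro s
  induction s using Nat.strong_induction_on with
  | _ s ih =>
    by_cases hs : s ≤ 2 * T
    · -- base regime
      set a := s - T with hadef
      have haT : a ≤ T := by omega
      have ham : a + (s - a) = s := by omega
      have hmT : s - a ≤ T := by omega
      have tele := noHit_telescope P x pi hrow a (s - a)
      rw [ham] at tele
      have hsum : ∑ j ∈ Finset.range (s - a), Dd P x pi (a + j) ≤ (T : ℝ) * pi x := by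
        calc ∑ j ∈ Finset.range (s - a), Dd P x pi (a + j)
            ≤ ∑ _j ∈ Finset.range (s - a), pi x :=
              Finset.sum_le_sum fun j _ => Dd_le_pix P x pi hP hpn hstat (a + j)
          _ = ((s - a : ℕ) : ℝ) * pi x := by
              rw [Finset.sum_const, Finset.card_range, nsmul_eq_mul]
          _ ≤ (T : ℝ) * pi x := by
              refine mul_le_mul_of_nonneg_right ?_ (hpn x)
              exact_mod_cast hmT
      have hSa : 1 - ((a : ℝ) + 1) * pi x ≤ noHit P x pi a :=
        noHit_ge P x pi hP hrow hpn hps hstat a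
      have hcast : ((a : ℝ) + 1) * pi x ≤ (T : ℝ) * pi x + pi x := by
        have : (a : ℝ) ≤ (T : ℝ) := by exact_mod_cast haT
        nlinarith [hpn x]
      have hSa2 : (1 : ℝ) / 2 ≤ noHit P x pi a := by linarith
      have hprod : η * (1 / 2) ≤ η * noHit P x pi a :=
        mul_le_mul_of_nonneg_left hSa2 hη0.le
      constructor
      · nlinarith
      · nlinarith
    · -- inductive regime
      have h2T : 2 * T < s := by omega
      obtain ⟨hpos1, hrec1⟩ := ih (s - T) (by omega)
      have tele := noHit_telescope P x pi hrow (s - T) T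
      have hsT : s - T + T = s := by omega
      rw [hsT] at tele
      have hBnn : 0 ≤ noHit P x pi (s - T - T) := noHit_nonneg P x pi hP hpn _
      have hsum : ∑ j ∈ Finset.range T, Dd P x pi (s - T + j)
          ≤ (T : ℝ) * (pstar * noHit P x pi (s - T - T)) := by
        calc ∑ j ∈ Finset.range T, Dd P x pi (s - T + j)
            ≤ ∑ _j ∈ Finset.range T, pstar * noHit P x pi (s - T - T) := by
              refine Finset.sum_le_sum fun j hj => ?_
              have hcond : T ≤ (s - T + j) + 1 := by omega
              refine le_trans (Dd_gap P x pi hP hpn T hT1 pstar hPT (s - T + j) hcond) ?_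
              refine mul_le_mul_of_nonneg_left ?_ hps0
              exact noHit_anti P x pi hP hrow hpn (by omega)
          _ = (T : ℝ) * (pstar * noHit P x pi (s - T - T)) := by
              rw [Finset.sum_const, Finset.card_range, nsmul_eq_mul]
      have hTB : (T : ℝ) * (pstar * noHit P x pi (s - T - T))
          ≤ (η / 2) * noHit P x pi (s - T - T) := by
        rw [← mul_assoc]
        exact mul_le_mul_of_nonneg_right hTp hBnn
      have hB2A : noHit P x pi (s - T - T) ≤ 2 * noHit P x pi (s - T) := by
        nlinarith
      constructor
      · nlinarith
      · nlinarith

end TS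

theorem time_shift_insensitivity
    (P : (n : ℕ) → Matrix (Fin n) (Fin n) ℝ)
    (pi : (n : ℕ) → Fin n → ℝ)
    (x : (n : ℕ) → Fin n)
    (T : ℕ → ℕ) (c : ℝ)
    (hc : 2 < c)
    (hT : Filter.Tendsto T Filter.atTop Filter.atTop)
    (hnn : ∀ n : ℕ, 2 ≤ n → ∀ y z : Fin n, 0 ≤ P n y z)
    (hrow : ∀ n : ℕ, 2 ≤ n → ∀ y : Fin n, ∑ z, P n y z = 1)
    (hirr : ∀ n : ℕ, 2 ≤ n → ∀ y z : Fin n, ∃ t : ℕ, 0 < (P n ^ t) y z)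
    (hpinn : ∀ n : ℕ, 2 ≤ n → ∀ y : Fin n, 0 ≤ pi n y)
    (hpisum : ∀ n : ℕ, 2 ≤ n → ∑ y, pi n y = 1)
    (hpistat : ∀ n : ℕ, 2 ≤ n → Matrix.vecMul (pi n) (P n) = pi n)
    (hpiuniq : ∀ n : ℕ, 2 ≤ n → ∀ rho : Fin n → ℝ, (∀ y, 0 ≤ rho y) →
      (∑ y, rho y = 1) → Matrix.vecMul rho (P n) = rho → rho = pi n)
    (hkirr : ∀ n : ℕ, 2 ≤ n → ∀ y z : Fin n, y ≠ x n → z ≠ x n →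
      ∃ t : ℕ, 0 < ((killed (P n) (x n)) ^ t) y z)
    (HP1 : ∀ ε : ℝ, 0 < ε → ∃ N : ℕ, ∀ n : ℕ, N ≤ n → ∀ y z : Fin n,
      (n : ℝ) ^ c * |(P n ^ T n) y z - pi n z| < ε)
    (HP2 : ∀ ε : ℝ, 0 < ε → ∃ N : ℕ, ∀ n : ℕ, N ≤ n → ∀ y : Fin n,
      (T n : ℝ) * pi n y < ε)
    (HP3 : ∀ M : ℝ, ∃ N : ℕ, ∀ n : ℕ, N ≤ n → ∀ y : Fin n,
      M < (n : ℝ) ^ 2 * pi n y)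
    :
    ∀ ε : ℝ, 0 < ε → ∃ N : ℕ, ∀ n : ℕ, N ≤ n → ∀ t : ℕ, T n < t →
      |noHit (P n) (x n) (pi n) (t - T n) / noHit (P n) (x n) (pi n) t - 1| < ε := by
  intro ε hε
  set η := min (1/2 : ℝ) (ε/4) with hηdef
  have hη0 : 0 < η := lt_min (by norm_num) (by positivity)
  have hη2 : η ≤ 1/2 := min_le_left _ _
  have hηε : η ≤ ε/4 := min_le_right _ _
  obtain ⟨N1, h1⟩ := HP1 1 one_pos
  obtain ⟨N2, h2⟩ := HP2 (η/4) (by positivity)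
  obtain ⟨N3, h3⟩ := HP3 1
  obtain ⟨N4, h4⟩ := Filter.eventually_atTop.mp (hT.eventually_ge_atTop 1)
  refine ⟨max (max N1 N2) (max (max N3 N4) 2), fun n hn t ht => ?_⟩
  have hn1 : N1 ≤ n := by omega
  have hn2' : N2 ≤ n := by omega
  have hn3 : N3 ≤ n := by omega
  have hn4 : N4 ≤ n := by omega
  have hn2 : 2 ≤ n := by omega
  have hT1 : 1 ≤ T n := h4 n hn4
  have hn2R : (2:ℝ) ≤ (n:ℝ) := by exact_mod_cast hn2
  have hnpos : (0:ℝ) < (n:ℝ) := by linarith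
  have hn1R : (1:ℝ) ≤ (n:ℝ) := by linarith
  have hA : (0:ℝ) < (n:ℝ) ^ c := Real.rpow_pos_of_pos hnpos c
  have hn2pos : (0:ℝ) < (n:ℝ) ^ 2 := by positivity
  have hpow : (n:ℝ) ^ 2 ≤ (n:ℝ) ^ c := by
    have h := Real.rpow_le_rpow_of_exponent_le hn1R hc.le
    rwa [show ((2:ℝ)) = ((2:ℕ):ℝ) by norm_num, Real.rpow_natCast] at h
  have hinv : ((n:ℝ) ^ c)⁻¹ ≤ ((n:ℝ) ^ 2)⁻¹ := inv_anti₀ hn2pos hpow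
  have hpxlow : ((n:ℝ) ^ 2)⁻¹ ≤ pi n (x n) := by
    have h := h3 n hn3 (x n)
    rw [← one_div, div_le_iff₀ hn2pos]
    nlinarith
  set pstar := pi n (x n) + ((n:ℝ) ^ c)⁻¹ with hpd
  have hpx : pi n (x n) ≤ pstar := le_add_of_nonneg_right (inv_nonneg.mpr hA.le)
  have hPT : ∀ v, (P n ^ T n) v (x n) ≤ pstar := by
    intro v
    have hh := h1 n hn1 v (x n)
    have habs : |(P n ^ T n) v (x n) - pi n (x n)| < ((n:ℝ) ^ c)⁻¹ := by
      rw [← one_div, lt_div_iff₀ hA]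
      nlinarith [abs_nonneg ((P n ^ T n) v (x n) - pi n (x n))]
    have h5 := (abs_lt.mp habs).2
    rw [hpd]
    linarith
  have hTp : (T n : ℝ) * pstar ≤ η / 2 := by
    have hTnn : (0:ℝ) ≤ (T n : ℝ) := Nat.cast_nonneg _
    have hb1 : (T n : ℝ) * ((n:ℝ)^c)⁻¹ ≤ (T n : ℝ) * pi n (x n) :=
      mul_le_mul_of_nonneg_left (le_trans hinv hpxlow) hTnn
    have hb2 := h2 n hn2' (x n)
    have hb3 : (T n : ℝ) * pstar = (T n : ℝ) * pi n (x n) + (T n : ℝ) * ((n:ℝ)^c)⁻¹ := by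
      rw [hpd]; ring
    linarith
  have main := TS.main_ind (P n) (x n) (pi n) (hnn n hn2) (hrow n hn2)
    (hpinn n hn2) (hpisum n hn2) (hpistat n hn2) (T n) hT1 pstar η hη0 hη2 hpx hTp hPT
  obtain ⟨hpost, hrect⟩ := main t
  have hmono := TS.noHit_anti (P n) (x n) (pi n) (hnn n hn2) (hrow n hn2)
    (hpinn n hn2) (Nat.sub_le t (T n))
  have h1mη : (0:ℝ) < 1 - η := by linarith
  have h1r : 1 ≤ noHit (P n) (x n) (pi n) (t - T n) / noHit (P n) (x n) (pi n) t :=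
    (one_le_div hpost).mpr hmono
  have hup : noHit (P n) (x n) (pi n) (t - T n) / noHit (P n) (x n) (pi n) t
      ≤ 1 / (1 - η) := by
    rw [div_le_div_iff₀ hpost h1mη]
    nlinarith
  have hfrac : 1 / (1 - η) ≤ 1 + 2 * η := by
    rw [div_le_iff₀ h1mη]
    nlinarith
  rw [abs_sub_lt_iff]
  constructor <;> linarith
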